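/- Let p ∈ (1,∞) and δ ≥ 0, and let S(P) = (δ+|P^sym|)^{p−2} P^sym. Then S is continuously differentiable on the set of 3×3 matrices P with P^sym ≠ 0 (and on all of ℝ^{3×3} if δ > 0), and there exist constants κ₀, κ₁ > 0 depending only on p (independent of δ) such that for all P with P^sym ≠ 0 and all 3×3 matrices Q one has ∑_{i,j,k,l} ∂_{kl} S_{ij}(P) Q_{ij} Q_{kl} ≥ κ₀·φ''(|P^sym|)·|Q^sym|² and |∂_{kl} S_{ij}(P)| ≤ κ₁·φ''(|P^sym|) for all indices i,j,k,l; i.e., S has (p,δ)-structure with characteristics depending only on p. -/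

import Mathlib

/-- 3×3 real matrices, represented as functions. -/
abbrev M3 : Type := Fin 3 → Fin 3 → ℝ

/-- Symmetric part `P^sym = (P + Pᵀ)/2`. -/
noncomputable def sym3 (P : M3) : M3 := fun i j => (P i j + P j i) / 2

/-- Frobenius norm. -/
noncomputable def frob3 (P : M3) : ℝ := Real.sqrt (∑ i, ∑ j, (P i j) ^ 2)

/-- Frobenius inner product `A·B = ∑_{ij} A_{ij} B_{ij}`. -/
noncomputable def dotF (A B : M3) : ℝ := ∑ i, ∑ j, A i j * B i j

/-- The stress tensor `S(P) = (δ+|P^sym|)^{p−2} P^sym`. -/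
noncomputable def Smat (p δ : ℝ) (P : M3) : M3 :=
  fun i j => (δ + frob3 (sym3 P)) ^ (p - 2) * sym3 P i j

/-- `φ''(t) = (δ+t)^(p-2) + (p-2)(δ+t)^(p-3)·t`. -/
noncomputable def phiSecond (p δ t : ℝ) : ℝ :=
  (δ + t) ^ (p - 2) + (p - 2) * (δ + t) ^ (p - 3) * t

open Finset

section basic

lemma sum_sq_nonneg (A : M3) : 0 ≤ ∑ i, ∑ j, A i j ^ 2 := by positivity

lemma frob3_nonneg (A : M3) : 0 ≤ frob3 A := Real.sqrt_nonneg _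

lemma frob3_sq (A : M3) : frob3 A ^ 2 = ∑ i, ∑ j, A i j ^ 2 :=
  Real.sq_sqrt (sum_sq_nonneg A)

lemma frob3_zero : frob3 (0 : M3) = 0 := by simp [frob3]

lemma frob3_pos {A : M3} (h : A ≠ 0) : 0 < frob3 A := by
  apply Real.sqrt_pos.mpr
  obtain ⟨i, hi⟩ := Function.ne_iff.mp h
  obtain ⟨j, hj⟩ := Function.ne_iff.mp hi
  have h1 : 0 < A i j ^ 2 := by
    have : A i j ≠ 0 := hj
    positivity
  have h2 : A i j ^ 2 ≤ ∑ j', A i j' ^ 2 :=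
    Finset.single_le_sum (f := fun j' => A i j' ^ 2) (fun _ _ => sq_nonneg _) (mem_univ j)
  have h3 : ∑ j', A i j' ^ 2 ≤ ∑ i', ∑ j', A i' j' ^ 2 :=
    Finset.single_le_sum (f := fun i' => ∑ j', A i' j' ^ 2)
      (fun _ _ => by positivity) (mem_univ i)
  linarith

lemma sq_entry_le (A : M3) (i j : Fin 3) : A i j ^ 2 ≤ ∑ i', ∑ j', A i' j' ^ 2 := by
  have h2 : A i j ^ 2 ≤ ∑ j', A i j' ^ 2 :=
    Finset.single_le_sum (f := fun j' => A i j' ^ 2) (fun _ _ => sq_nonneg _) (mem_univ j)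
  have h3 : ∑ j', A i j' ^ 2 ≤ ∑ i', ∑ j', A i' j' ^ 2 :=
    Finset.single_le_sum (f := fun i' => ∑ j', A i' j' ^ 2)
      (fun _ _ => by positivity) (mem_univ i)
  linarith

lemma abs_entry_le_frob3 (A : M3) (i j : Fin 3) : |A i j| ≤ frob3 A := by
  rw [frob3, ← Real.sqrt_sq_eq_abs]
  exact Real.sqrt_le_sqrt (sq_entry_le A i j)

lemma sq_dotF_le (A B : M3) : dotF A B ^ 2 ≤ frob3 A ^ 2 * frob3 B ^ 2 := by
  rw [frob3_sq, frob3_sq]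
  have h := Finset.sum_mul_sq_le_sq_mul_sq Finset.univ
    (fun x : Fin 3 × Fin 3 => A x.1 x.2) (fun x : Fin 3 × Fin 3 => B x.1 x.2)
  simpa [dotF, Fintype.sum_prod_type] using h

lemma abs_dotF_le (A B : M3) : |dotF A B| ≤ frob3 A * frob3 B := by
  have h2 : dotF A B ^ 2 ≤ (frob3 A * frob3 B) ^ 2 := by
    rw [mul_pow]; exact sq_dotF_le A B
  calc |dotF A B| = Real.sqrt (dotF A B ^ 2) := (Real.sqrt_sq_eq_abs _).symm
    _ ≤ Real.sqrt ((frob3 A * frob3 B) ^ 2) := Real.sqrt_le_sqrt h2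
    _ = frob3 A * frob3 B := Real.sqrt_sq (mul_nonneg (frob3_nonneg A) (frob3_nonneg B))

lemma sym3_symm (P : M3) (i j : Fin 3) : sym3 P i j = sym3 P j i := by
  simp [sym3]; ring

lemma sym3_zero_of (P : M3) (h : sym3 P = 0) (i j : Fin 3) : sym3 P i j = 0 := by
  rw [h]; rfl

lemma dotF_symm_right {X : M3} (hX : ∀ i j, X i j = X j i) (Q : M3) :
    dotF X Q = dotF X (sym3 Q) := by
  have hswap : ∑ i, ∑ j, X i j * Q j i = ∑ i, ∑ j, X i j * Q i j := by
    rw [Finset.sum_comm]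
    exact Finset.sum_congr rfl fun i _ => Finset.sum_congr rfl fun j _ => by rw [hX]
  have h1 : ∑ i, ∑ j, X i j * sym3 Q i j
      = ∑ i, ∑ j, (X i j * Q i j / 2 + X i j * Q j i / 2) :=
    Finset.sum_congr rfl fun i _ => Finset.sum_congr rfl fun j _ => by
      simp [sym3]; ring
  simp only [dotF, h1, Finset.sum_add_distrib, ← Finset.sum_div]
  linarith

lemma dotF_self (B : M3) : dotF B B = frob3 B ^ 2 := by
  rw [frob3_sq]; simp [dotF, pow_two]

lemma frob3_sym3_le (Q : M3) : frob3 (sym3 Q) ≤ frob3 Q := by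
  apply Real.sqrt_le_sqrt
  have h1 : ∀ i j, sym3 Q i j ^ 2 ≤ (Q i j ^ 2 + Q j i ^ 2) / 2 := by
    intro i j; simp only [sym3]; nlinarith [sq_nonneg (Q i j - Q j i)]
  have h2 : ∑ i, ∑ j, sym3 Q i j ^ 2 ≤ ∑ i, ∑ j, (Q i j ^ 2 + Q j i ^ 2) / 2 :=
    Finset.sum_le_sum fun i _ => Finset.sum_le_sum fun j _ => h1 i j
  have h3 : ∑ i, ∑ j, (Q i j ^ 2 + Q j i ^ 2) / 2 = ∑ i, ∑ j, Q i j ^ 2 := by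
    have hs : ∑ i, ∑ j, (Q j i ^ 2 : ℝ) = ∑ i, ∑ j, Q i j ^ 2 := Finset.sum_comm
    simp only [add_div, Finset.sum_add_distrib, ← Finset.sum_div]
    linarith
  linarith

lemma entry_abs_le_norm (H : M3) (i j : Fin 3) : |H i j| ≤ ‖H‖ := by
  calc |H i j| = ‖H i j‖ := rfl
    _ ≤ ‖H i‖ := norm_le_pi_norm (H i) j
    _ ≤ ‖H‖ := norm_le_pi_norm H i

lemma frob3_le_norm (H : M3) : frob3 H ≤ 3 * ‖H‖ := by
  have h : ∑ i, ∑ j, H i j ^ 2 ≤ 9 * ‖H‖ ^ 2 := by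
    have : ∀ i j : Fin 3, H i j ^ 2 ≤ ‖H‖ ^ 2 := by
      intro i j
      have := entry_abs_le_norm H i j
      nlinarith [sq_abs (H i j), abs_nonneg (H i j)]
    calc ∑ i, ∑ j, H i j ^ 2 ≤ ∑ _i : Fin 3, ∑ _j : Fin 3, ‖H‖ ^ 2 :=
          Finset.sum_le_sum fun i _ => Finset.sum_le_sum fun j _ => this i j
      _ = 9 * ‖H‖ ^ 2 := by simp; ring
  calc frob3 H = Real.sqrt (∑ i, ∑ j, H i j ^ 2) := rfl
    _ ≤ Real.sqrt (9 * ‖H‖ ^ 2) := Real.sqrt_le_sqrt h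
    _ = 3 * ‖H‖ := by
        rw [show (9 : ℝ) * ‖H‖ ^ 2 = (3 * ‖H‖) ^ 2 by ring]
        exact Real.sqrt_sq (by positivity)

lemma sup_norm_le_frob3 (A : M3) : ‖A‖ ≤ frob3 A := by
  rw [pi_norm_le_iff_of_nonneg (frob3_nonneg A)]
  intro i
  rw [pi_norm_le_iff_of_nonneg (frob3_nonneg A)]
  intro j
  exact abs_entry_le_frob3 A i j

end basic

section clm

noncomputable def entryCLM (i j : Fin 3) : M3 →L[ℝ] ℝ :=
  (ContinuousLinearMap.proj j :((Fin 3 → ℝ)) →L[ℝ] ℝ).comp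
    (ContinuousLinearMap.proj i)

@[simp] lemma entryCLM_apply (i j : Fin 3) (A : M3) : entryCLM i j A = A i j := rfl

noncomputable def symL : M3 →L[ℝ] M3 :=
  LinearMap.toContinuousLinearMap
    { toFun := sym3
      map_add' := by
        intro x y; funext i j
        simp [sym3]; ring
      map_smul' := by
        intro c x; funext i j
        simp [sym3, Pi.smul_apply, smul_eq_mul]; ring }

@[simp] lemma symL_apply (P : M3) : symL P = sym3 P := rfl

noncomputable def dotCLM (A : M3) : M3 →L[ℝ] ℝ := ∑ i, ∑ j, A i j • entryCLM i j

@[simp] lemma dotCLM_apply (A Q : M3) : dotCLM A Q = dotF A Q := by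
  simp [dotCLM, dotF, ContinuousLinearMap.sum_apply]

noncomputable def Wop (A : M3) : M3 →L[ℝ] M3 := ((dotCLM A).comp symL).smulRight A

@[simp] lemma Wop_apply (A Q : M3) : Wop A Q = dotF A (sym3 Q) • A := by
  simp [Wop]

noncomputable def Dmat (p δ : ℝ) (P : M3) : M3 →L[ℝ] M3 :=
  (δ + frob3 (sym3 P)) ^ (p - 2) • symL +
    ((p - 2) * (δ + frob3 (sym3 P)) ^ (p - 3) / frob3 (sym3 P)) • Wop (sym3 P)

lemma Dmat_apply (p δ : ℝ) (P Q : M3) :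
    Dmat p δ P Q = fun i j =>
      (δ + frob3 (sym3 P)) ^ (p - 2) * sym3 Q i j +
        (p - 2) * (δ + frob3 (sym3 P)) ^ (p - 3) / frob3 (sym3 P) *
          dotF (sym3 P) (sym3 Q) * sym3 P i j := by
  funext i j
  simp [Dmat, Pi.smul_apply, smul_eq_mul]
  ring

end clm

section deriv

lemma hasFDerivAt_q (A : M3) :
    HasFDerivAt (fun X : M3 => ∑ i, ∑ j, X i j ^ 2)
      (∑ i, ∑ j, (2 * A i j) • entryCLM i j) A := by
  apply HasFDerivAt.fun_sum; intro i _
  apply HasFDerivAt.fun_sum; intro j _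
  have h : HasFDerivAt (fun X : M3 => X i j) (entryCLM i j) A :=
    (entryCLM i j).hasFDerivAt
  have := h.mul h
  simpa [pow_two, two_mul, add_smul, Pi.mul_def] using this

lemma hasFDerivAt_frobsym (P : M3) (hP : sym3 P ≠ 0) :
    HasFDerivAt (fun X : M3 => frob3 (sym3 X))
      ((frob3 (sym3 P))⁻¹ • (dotCLM (sym3 P)).comp symL) P := by
  have ha : 0 < frob3 (sym3 P) := frob3_pos hP
  have hs : (0:ℝ) < ∑ i, ∑ j, sym3 P i j ^ 2 := by
    have := frob3_sq (sym3 P); nlinarith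
  have hq : HasFDerivAt (fun X : M3 => ∑ i, ∑ j, sym3 X i j ^ 2)
      ((∑ i, ∑ j, (2 * sym3 P i j) • entryCLM i j).comp symL) P := by
    have := (hasFDerivAt_q (sym3 P)).comp P symL.hasFDerivAt
    simpa [Function.comp_def] using this
  have hsqrt := (Real.hasDerivAt_sqrt hs.ne').comp_hasFDerivAt P hq
  have heq : ((1 : ℝ) / (2 * Real.sqrt (∑ i, ∑ j, sym3 P i j ^ 2))) •
        ((∑ i, ∑ j, (2 * sym3 P i j) • entryCLM i j).comp symL)
      = (frob3 (sym3 P))⁻¹ • (dotCLM (sym3 P)).comp symL := by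
    have hfr : Real.sqrt (∑ i, ∑ j, sym3 P i j ^ 2) = frob3 (sym3 P) := rfl
    ext Q
    simp only [ContinuousLinearMap.coe_smul', Pi.smul_apply,
      ContinuousLinearMap.coe_comp', Function.comp_apply, symL_apply,
      ContinuousLinearMap.coe_sum', Finset.sum_apply,
      ContinuousLinearMap.smul_apply, entryCLM_apply, dotCLM_apply,
      smul_eq_mul, hfr, dotF]
    rw [show ∑ i, ∑ j, 2 * sym3 P i j * sym3 Q i j
        = 2 * ∑ i, ∑ j, sym3 P i j * sym3 Q i j by
      rw [Finset.mul_sum]; congr 1; funext i; rw [Finset.mul_sum]; congr 1; funext j; ring]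
    field_simp
  rw [← heq]
  exact hsqrt

lemma hasDerivAt_g (p δ a : ℝ) (h : 0 < δ + a) :
    HasDerivAt (fun t : ℝ => (δ + t) ^ (p - 2)) ((p - 2) * (δ + a) ^ (p - 3)) a := by
  have h1 : HasDerivAt (fun t : ℝ => δ + t) 1 a := by
    simpa using (hasDerivAt_id a).const_add δ
  have h2 : HasDerivAt (fun x : ℝ => x ^ (p - 2)) ((p - 2) * (δ + a) ^ (p - 2 - 1)) (δ + a) :=
    Real.hasDerivAt_rpow_const (Or.inl h.ne')
  have := h2.comp a h1
  simpa [Function.comp_def, show p - 2 - 1 = p - 3 by ring] using this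

lemma Smat_eq_smul (p δ : ℝ) :
    Smat p δ = fun X : M3 => (δ + frob3 (sym3 X)) ^ (p - 2) • sym3 X := by
  funext X i j
  simp [Smat, Pi.smul_apply, smul_eq_mul]

lemma hasFDerivAt_Smat (p δ : ℝ) (P : M3) (hδ : 0 ≤ δ) (hP : sym3 P ≠ 0) :
    HasFDerivAt (Smat p δ) (Dmat p δ P) P := by
  have ha : 0 < frob3 (sym3 P) := frob3_pos hP
  have hδa : 0 < δ + frob3 (sym3 P) := by linarith
  have hN := hasFDerivAt_frobsym P hP
  have hg := hasDerivAt_g p δ (frob3 (sym3 P)) hδa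
  have hc : HasFDerivAt (fun X : M3 => (δ + frob3 (sym3 X)) ^ (p - 2))
      (((p - 2) * (δ + frob3 (sym3 P)) ^ (p - 3)) •
        ((frob3 (sym3 P))⁻¹ • (dotCLM (sym3 P)).comp symL)) P := by
    have := hg.comp_hasFDerivAt P hN
    simpa [Function.comp_def] using this
  have hS := hc.smul symL.hasFDerivAt
  rw [Smat_eq_smul p δ]
  have heq : ((δ + frob3 (sym3 P)) ^ (p - 2)) • symL +
      ((((p - 2) * (δ + frob3 (sym3 P)) ^ (p - 3)) •
        ((frob3 (sym3 P))⁻¹ • (dotCLM (sym3 P)).comp symL)).smulRight (symL P))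
      = Dmat p δ P := by
    ext Q i j
    simp only [Dmat, ContinuousLinearMap.add_apply, ContinuousLinearMap.coe_smul',
      Pi.smul_apply, symL_apply, ContinuousLinearMap.smulRight_apply,
      ContinuousLinearMap.coe_comp', Function.comp_apply, dotCLM_apply,
      Wop_apply, smul_eq_mul, Pi.add_apply]
    field_simp
  rw [← heq]
  exact hS

lemma frob3_sym3_eq_zero {P : M3} (h : sym3 P = 0) : frob3 (sym3 P) = 0 := by
  rw [h]; exact frob3_zero

lemma sym3_add (P H : M3) : sym3 (P + H) = sym3 P + sym3 H := by
  funext i j; simp [sym3, Pi.add_apply]; ring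

lemma continuous_frobsym : Continuous (fun X : M3 => frob3 (sym3 X)) := by
  apply Real.continuous_sqrt.comp
  apply continuous_finset_sum; intro i _
  apply continuous_finset_sum; intro j _
  have : Continuous fun X : M3 => sym3 X i j := by
    simp only [sym3]
    exact ((((continuous_apply j).comp (continuous_apply i) : Continuous fun X : M3 => X i j)).add
      ((continuous_apply i).comp (continuous_apply j) : Continuous fun X : M3 => X j i)).div_const 2
  exact this.pow 2

lemma hasFDerivAt_Smat_zero (p δ : ℝ) (hδ : 0 < δ) (P : M3) (hP : sym3 P = 0) :
    HasFDerivAt (Smat p δ) (Dmat p δ P) P := by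
  rw [hasFDerivAt_iff_isLittleO_nhds_zero]
  rw [Asymptotics.isLittleO_iff]
  intro c hc
  have hcont : ContinuousAt (fun H : M3 => (δ + frob3 (sym3 H)) ^ (p - 2)) 0 := by
    apply ContinuousAt.comp (x := (0:M3))
      (g := fun x : ℝ => x ^ (p - 2))
    · apply Real.continuousAt_rpow_const
      left
      have : frob3 (sym3 (0:M3)) = 0 := by
        simp [show sym3 (0:M3) = 0 by funext i j; simp [sym3], frob3_zero]
      rw [this]; simpa using hδ.ne'
    · exact (continuous_const.add continuous_frobsym).continuousAt
  have hev : ∀ᶠ H : M3 in nhds 0,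
      |(δ + frob3 (sym3 H)) ^ (p - 2) - δ ^ (p - 2)| < c := by
    have h0 : frob3 (sym3 (0:M3)) = 0 := by
      simp [show sym3 (0:M3) = 0 by funext i j; simp [sym3], frob3_zero]
    have htd := hcont.tendsto
    rw [h0, add_zero] at htd
    have := Metric.tendsto_nhds.mp htd c hc
    filter_upwards [this] with H hH
    simpa [Real.dist_eq] using hH
  filter_upwards [hev] with H hH
  have hf0 : frob3 (sym3 P) = 0 := frob3_sym3_eq_zero hP
  have hsym : sym3 (P + H) = sym3 H := by rw [sym3_add, hP]; simp
  have hdiff : Smat p δ (P + H) - Smat p δ P - Dmat p δ P H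
      = fun i j => ((δ + frob3 (sym3 H)) ^ (p - 2) - δ ^ (p - 2)) * sym3 H i j := by
    funext i j
    have h1 : Smat p δ (P + H) i j = (δ + frob3 (sym3 H)) ^ (p - 2) * sym3 H i j := by
      simp [Smat, hsym]
    have h2 : Smat p δ P i j = 0 := by
      simp [Smat, sym3_zero_of P hP i j]
    have h3 : Dmat p δ P H i j = δ ^ (p - 2) * sym3 H i j := by
      rw [Dmat_apply]
      simp [hf0, sym3_zero_of P hP i j]
    simp only [Pi.sub_apply, h1, h2, h3]
    ring
  rw [hdiff]
  rw [pi_norm_le_iff_of_nonneg (by positivity)]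
  intro i
  rw [pi_norm_le_iff_of_nonneg (by positivity)]
  intro j
  have hsH : |sym3 H i j| ≤ ‖H‖ := by
    have h1 := entry_abs_le_norm H i j
    have h2 := entry_abs_le_norm H j i
    have h3 := abs_add_le (H i j) (H j i)
    simp only [sym3, abs_div, abs_two]
    linarith
  calc ‖((δ + frob3 (sym3 H)) ^ (p - 2) - δ ^ (p - 2)) * sym3 H i j‖
      = |(δ + frob3 (sym3 H)) ^ (p - 2) - δ ^ (p - 2)| * |sym3 H i j| := abs_mul _ _
    _ ≤ c * ‖H‖ := by
        apply mul_le_mul hH.le hsH (abs_nonneg _)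
        exact hc.le

end deriv

section cont

lemma Wop_zero : Wop (0 : M3) = 0 := by
  ext Q i j
  simp [Wop]

lemma continuous_Wop_sym : Continuous (fun P : M3 => Wop (sym3 P)) := by
  have hsymc : Continuous (fun P : M3 => sym3 P) := symL.continuous
  have hdot : Continuous (fun P : M3 => dotCLM (sym3 P)) := by
    apply continuous_finset_sum; intro i _
    apply continuous_finset_sum; intro j _
    exact (((continuous_apply j).comp (continuous_apply i)).comp hsymc).smul
      (continuous_const : Continuous fun _ : M3 => entryCLM i j)
  have hT : Continuous (fun P : M3 => (dotCLM (sym3 P)).comp symL) :=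
    hdot.clm_comp continuous_const
  exact (isBoundedBilinearMap_smulRight (𝕜 := ℝ) (E := M3) (F := M3)).continuous.comp
    (hT.prodMk hsymc)

lemma norm_Wop_le (A : M3) : ‖Wop A‖ ≤ 3 * frob3 A ^ 2 := by
  apply ContinuousLinearMap.opNorm_le_bound _ (by positivity)
  intro Q
  rw [Wop_apply]
  have h1 : ‖dotF A (sym3 Q) • A‖ = |dotF A (sym3 Q)| * ‖A‖ := by
    rw [norm_smul, Real.norm_eq_abs]
  rw [h1]
  have h2 : |dotF A (sym3 Q)| ≤ frob3 A * (3 * ‖Q‖) := by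
    calc |dotF A (sym3 Q)| ≤ frob3 A * frob3 (sym3 Q) := abs_dotF_le _ _
      _ ≤ frob3 A * frob3 Q := by
          exact mul_le_mul_of_nonneg_left (frob3_sym3_le Q) (frob3_nonneg A)
      _ ≤ frob3 A * (3 * ‖Q‖) := by
          exact mul_le_mul_of_nonneg_left (frob3_le_norm Q) (frob3_nonneg A)
  have h3 : ‖A‖ ≤ frob3 A := sup_norm_le_frob3 A
  calc |dotF A (sym3 Q)| * ‖A‖ ≤ (frob3 A * (3 * ‖Q‖)) * frob3 A := by
        apply mul_le_mul h2 h3 (norm_nonneg A)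
        exact mul_nonneg (frob3_nonneg A) (by positivity)
    _ = 3 * frob3 A ^ 2 * ‖Q‖ := by ring

lemma continuousAt_rpow_frob (p δ q : ℝ) (hδ : 0 < δ) (P₀ : M3) :
    ContinuousAt (fun P : M3 => (δ + frob3 (sym3 P)) ^ q) P₀ := by
  apply ContinuousAt.comp (g := fun x : ℝ => x ^ q)
  · apply Real.continuousAt_rpow_const
    left
    have := frob3_nonneg (sym3 P₀)
    positivity
  · exact (continuous_const.add continuous_frobsym).continuousAt

lemma continuous_Dmat (p δ : ℝ) (hδ : 0 < δ) : Continuous (Dmat p δ) := by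
  rw [continuous_iff_continuousAt]
  intro P₀
  have h1 : ContinuousAt
      (fun P : M3 => ((δ + frob3 (sym3 P)) ^ (p - 2)) • (symL : M3 →L[ℝ] M3)) P₀ :=
    (continuousAt_rpow_frob p δ (p - 2) hδ P₀).smul
      (continuousAt_const : ContinuousAt (fun _ : M3 => (symL : M3 →L[ℝ] M3)) P₀)
  have h2 : ContinuousAt (fun P : M3 =>
      ((p - 2) * (δ + frob3 (sym3 P)) ^ (p - 3) / frob3 (sym3 P)) • Wop (sym3 P)) P₀ := by
    rcases eq_or_ne (sym3 P₀) 0 with h0 | h0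
    · -- squeeze to zero
      have hval : ((p - 2) * (δ + frob3 (sym3 P₀)) ^ (p - 3) / frob3 (sym3 P₀)) •
          Wop (sym3 P₀) = 0 := by
        rw [h0, Wop_zero, smul_zero]
      unfold ContinuousAt
      simp only [hval]
      apply squeeze_zero_norm
        (a := fun P : M3 => 3 * |p - 2| * (δ + frob3 (sym3 P)) ^ (p - 3) * frob3 (sym3 P))
      · intro P
        rcases eq_or_ne (sym3 P) 0 with hz | hz
        · rw [hz, Wop_zero, smul_zero, norm_zero, frob3_zero]
          simp
        · have ha : 0 < frob3 (sym3 P) := frob3_pos hz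
          have hb : (0:ℝ) < δ + frob3 (sym3 P) := by linarith
          have hX3 : (0:ℝ) < (δ + frob3 (sym3 P)) ^ (p - 3) := Real.rpow_pos_of_pos hb _
          have hns : ‖((p - 2) * (δ + frob3 (sym3 P)) ^ (p - 3) / frob3 (sym3 P)) •
                Wop (sym3 P)‖
              = |(p - 2) * (δ + frob3 (sym3 P)) ^ (p - 3) / frob3 (sym3 P)| *
                ‖Wop (sym3 P)‖ := by
            rw [show |(p - 2) * (δ + frob3 (sym3 P)) ^ (p - 3) / frob3 (sym3 P)|
                = ‖(p - 2) * (δ + frob3 (sym3 P)) ^ (p - 3) / frob3 (sym3 P)‖ from rfl]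
            exact norm_smul ((p - 2) * (δ + frob3 (sym3 P)) ^ (p - 3) / frob3 (sym3 P))
              (Wop (sym3 P))
          rw [hns]
          have habs : |(p - 2) * (δ + frob3 (sym3 P)) ^ (p - 3) / frob3 (sym3 P)|
              = |p - 2| * (δ + frob3 (sym3 P)) ^ (p - 3) / frob3 (sym3 P) := by
            rw [abs_div, abs_mul, abs_of_pos hX3, abs_of_pos ha]
          rw [habs]
          have hW := norm_Wop_le (sym3 P)
          calc |p - 2| * (δ + frob3 (sym3 P)) ^ (p - 3) / frob3 (sym3 P) * ‖Wop (sym3 P)‖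
              ≤ |p - 2| * (δ + frob3 (sym3 P)) ^ (p - 3) / frob3 (sym3 P) *
                (3 * frob3 (sym3 P) ^ 2) := by
                apply mul_le_mul_of_nonneg_left hW
                positivity
            _ = 3 * |p - 2| * (δ + frob3 (sym3 P)) ^ (p - 3) * frob3 (sym3 P) := by
                field_simp
      · have hc : ContinuousAt
            (fun P : M3 => 3 * |p - 2| * (δ + frob3 (sym3 P)) ^ (p - 3) * frob3 (sym3 P)) P₀ :=
          ((continuousAt_const.mul (continuousAt_rpow_frob p δ (p - 3) hδ P₀)).mul
            continuous_frobsym.continuousAt)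
        have hzero : 3 * |p - 2| * (δ + frob3 (sym3 P₀)) ^ (p - 3) * frob3 (sym3 P₀) = 0 := by
          rw [frob3_sym3_eq_zero h0]; ring
        have := hc.tendsto
        rw [hzero] at this
        exact this
    · have ha : 0 < frob3 (sym3 P₀) := frob3_pos h0
      have hcoef : ContinuousAt
          (fun P : M3 => (p - 2) * (δ + frob3 (sym3 P)) ^ (p - 3) / frob3 (sym3 P)) P₀ :=
        (continuousAt_const.mul (continuousAt_rpow_frob p δ (p - 3) hδ P₀)).div
          continuous_frobsym.continuousAt ha.ne'
      exact hcoef.smul (continuous_Wop_sym.continuousAt)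
  have := h1.add h2
  exact this

lemma fderiv_Smat_eq (p δ : ℝ) (hδ : 0 ≤ δ) (P : M3) (hP : sym3 P ≠ 0) :
    fderiv ℝ (Smat p δ) P = Dmat p δ P :=
  (hasFDerivAt_Smat p δ P hδ hP).fderiv

lemma contDiff_Smat (p δ : ℝ) (hδ : 0 < δ) : ContDiff ℝ 1 (Smat p δ) := by
  rw [contDiff_one_iff_fderiv]
  constructor
  · intro P
    rcases eq_or_ne (sym3 P) 0 with h | h
    · exact (hasFDerivAt_Smat_zero p δ hδ P h).differentiableAt
    · exact (hasFDerivAt_Smat p δ P hδ.le h).differentiableAt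
  · have heq : fderiv ℝ (Smat p δ) = Dmat p δ := by
      funext P
      rcases eq_or_ne (sym3 P) 0 with h | h
      · exact (hasFDerivAt_Smat_zero p δ hδ P h).fderiv
      · exact (hasFDerivAt_Smat p δ P hδ.le h).fderiv
    rw [heq]
    exact continuous_Dmat p δ hδ

lemma contDiffAt_Smat (p δ : ℝ) (hδ : 0 ≤ δ) (P : M3) (hP : sym3 P ≠ 0) :
    ContDiffAt ℝ 1 (Smat p δ) P := by
  have ha : 0 < frob3 (sym3 P) := frob3_pos hP
  have hδa : 0 < δ + frob3 (sym3 P) := by linarith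
  have hq : ContDiff ℝ 1 (fun X : M3 => ∑ i, ∑ j, sym3 X i j ^ 2) := by
    apply ContDiff.sum; intro i _
    apply ContDiff.sum; intro j _
    exact (((entryCLM i j).comp symL).contDiff).pow 2
  have hs : (∑ i, ∑ j, sym3 P i j ^ 2) ≠ 0 := by
    have := frob3_sq (sym3 P)
    nlinarith
  have h3 : ContDiffAt ℝ 1 (fun X : M3 => frob3 (sym3 X)) P :=
    (Real.contDiffAt_sqrt hs).comp P hq.contDiffAt
  have h5 : ContDiffAt ℝ 1 (fun X : M3 => (δ + frob3 (sym3 X)) ^ (p - 2)) P :=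
    ((Real.contDiffAt_rpow_const_of_ne (p := p - 2) (n := 1) hδa.ne').comp P
      ((contDiffAt_const (c := δ)).add h3) :
      ContDiffAt ℝ 1 ((fun x : ℝ => x ^ (p - 2)) ∘ fun X : M3 => δ + frob3 (sym3 X)) P)
  have h6 := h5.smul (symL.contDiff.contDiffAt)
  rw [Smat_eq_smul p δ]
  exact h6

end cont

section scalar

lemma rpow_shift {x : ℝ} (hx : 0 < x) (p : ℝ) : x ^ (p - 3) * x = x ^ (p - 2) := by
  rw [← Real.rpow_add_one hx.ne' (p - 3)]
  congr 1
  ring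

lemma lower_scalar {p : ℝ} (hp : 1 < p) {δ : ℝ} (hδ : 0 ≤ δ) {a b t : ℝ}
    (ha : 0 < a) (hb : 0 ≤ b) (ht : t ^ 2 ≤ a ^ 2 * b ^ 2) :
    min (p - 1)⁻¹ 1 * phiSecond p δ a * b ^ 2
      ≤ (δ + a) ^ (p - 2) * b ^ 2 + (p - 2) * (δ + a) ^ (p - 3) / a * t ^ 2 := by
  have hδa : 0 < δ + a := by linarith
  have hG : 0 < (δ + a) ^ (p - 2) := Real.rpow_pos_of_pos hδa _
  have hX3 : 0 < (δ + a) ^ (p - 3) := Real.rpow_pos_of_pos hδa _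
  have hkey : (δ + a) ^ (p - 3) * (δ + a) = (δ + a) ^ (p - 2) := rpow_shift hδa p
  have hp1 : 0 < p - 1 := by linarith
  have hφeq : phiSecond p δ a = (δ + a) ^ (p - 2) + (p - 2) * (δ + a) ^ (p - 3) * a := rfl
  rcases le_or_gt 2 p with h2 | h2
  · have hn2 : (0:ℝ) ≤ (p - 2) * (δ + a) ^ (p - 3) :=
      mul_nonneg (by linarith) hX3.le
    have hmul : (p - 2) * (δ + a) ^ (p - 3) * a ≤ (p - 2) * (δ + a) ^ (p - 3) * (δ + a) :=
      mul_le_mul_of_nonneg_left (by linarith) hn2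
    have hφle : phiSecond p δ a ≤ (p - 1) * (δ + a) ^ (p - 2) := by
      rw [hφeq]
      nlinarith [hkey, hn2, hmul]
    have hφ0 : 0 ≤ phiSecond p δ a := by
      rw [hφeq]
      nlinarith [mul_nonneg hn2 ha.le]
    have hterm : 0 ≤ (p - 2) * (δ + a) ^ (p - 3) / a * t ^ 2 :=
      mul_nonneg (div_nonneg hn2 ha.le) (sq_nonneg t)
    have hmin : min (p - 1)⁻¹ 1 * phiSecond p δ a ≤ (δ + a) ^ (p - 2) := by
      calc min (p - 1)⁻¹ 1 * phiSecond p δ a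
          ≤ (p - 1)⁻¹ * phiSecond p δ a :=
            mul_le_mul_of_nonneg_right (min_le_left _ _) hφ0
        _ ≤ (p - 1)⁻¹ * ((p - 1) * (δ + a) ^ (p - 2)) :=
            mul_le_mul_of_nonneg_left hφle (by positivity)
        _ = (δ + a) ^ (p - 2) := by field_simp
    have := mul_le_mul_of_nonneg_right hmin (sq_nonneg b)
    linarith
  · have hp2 : p - 2 < 0 := by linarith
    have hφ0 : 0 ≤ phiSecond p δ a := by
      rw [hφeq]
      nlinarith [hkey, mul_pos hX3 ha, mul_nonneg hX3.le hδ]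
    have hterm : (p - 2) * (δ + a) ^ (p - 3) * a * b ^ 2
        ≤ (p - 2) * (δ + a) ^ (p - 3) / a * t ^ 2 := by
      rw [div_mul_eq_mul_div, le_div_iff₀ ha]
      nlinarith [mul_nonneg (mul_nonneg (show (0:ℝ) ≤ 2 - p by linarith) hX3.le)
        (sub_nonneg.mpr ht)]
    have hmin1 : min (p - 1)⁻¹ 1 * phiSecond p δ a * b ^ 2 ≤ phiSecond p δ a * b ^ 2 := by
      have hle := min_le_right (p - 1)⁻¹ (1:ℝ)
      nlinarith [mul_nonneg hφ0 (sq_nonneg b)]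
    have hexp : phiSecond p δ a * b ^ 2
        = (δ + a) ^ (p - 2) * b ^ 2 + (p - 2) * (δ + a) ^ (p - 3) * a * b ^ 2 := by
      rw [hφeq]; ring
    linarith

lemma upper_scalar {p : ℝ} (hp : 1 < p) {δ : ℝ} (hδ : 0 ≤ δ) {a : ℝ} (ha : 0 < a) :
    (δ + a) ^ (p - 2) + |p - 2| * (δ + a) ^ (p - 3) * a
      ≤ max 1 ((3 - p) / (p - 1)) * phiSecond p δ a := by
  have hδa : 0 < δ + a := by linarith
  have hG : 0 < (δ + a) ^ (p - 2) := Real.rpow_pos_of_pos hδa _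
  have hX3 : 0 < (δ + a) ^ (p - 3) := Real.rpow_pos_of_pos hδa _
  have hkey : (δ + a) ^ (p - 3) * (δ + a) = (δ + a) ^ (p - 2) := rpow_shift hδa p
  have hp1 : 0 < p - 1 := by linarith
  have hφeq : phiSecond p δ a = (δ + a) ^ (p - 2) + (p - 2) * (δ + a) ^ (p - 3) * a := rfl
  rcases le_or_gt 2 p with h2 | h2
  · rw [abs_of_nonneg (show (0:ℝ) ≤ p - 2 by linarith)]
    have hφ0 : 0 ≤ phiSecond p δ a := by
      rw [hφeq]
      nlinarith [mul_nonneg (mul_nonneg (show (0:ℝ) ≤ p - 2 by linarith) hX3.le) ha.le]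
    have h1 : (1:ℝ) ≤ max 1 ((3 - p) / (p - 1)) := le_max_left _ _
    have := mul_le_mul_of_nonneg_right h1 hφ0
    rw [hφeq] at this ⊢
    nlinarith
  · rw [abs_of_neg (show p - 2 < 0 by linarith)]
    have hglower : (p - 1) * (δ + a) ^ (p - 2) ≤ phiSecond p δ a := by
      rw [hφeq, ← hkey]
      nlinarith [mul_nonneg (mul_nonneg (show (0:ℝ) ≤ 2 - p by linarith) hX3.le) hδ]
    have hφ0 : 0 ≤ phiSecond p δ a :=
      le_trans (mul_nonneg hp1.le hG.le) hglower
    have hr : (3 - p) / (p - 1) ≤ max 1 ((3 - p) / (p - 1)) := le_max_right _ _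
    have hL : (δ + a) ^ (p - 2) + -(p - 2) * (δ + a) ^ (p - 3) * a
        ≤ (3 - p) * (δ + a) ^ (p - 2) := by
      rw [← hkey]
      nlinarith [mul_nonneg (mul_nonneg (show (0:ℝ) ≤ 2 - p by linarith) hX3.le) hδ]
    have hfinal : (3 - p) * (δ + a) ^ (p - 2) ≤ (3 - p) / (p - 1) * phiSecond p δ a := by
      rw [div_mul_eq_mul_div, le_div_iff₀ hp1]
      nlinarith [mul_le_mul_of_nonneg_left hglower (show (0:ℝ) ≤ 3 - p by linarith)]
    have hmax : (3 - p) / (p - 1) * phiSecond p δ a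
        ≤ max 1 ((3 - p) / (p - 1)) * phiSecond p δ a :=
      mul_le_mul_of_nonneg_right hr hφ0
    linarith

end scalar

section single

lemma frob3_single (k l : Fin 3) : frob3 ((Pi.single k (Pi.single l (1:ℝ)) : M3)) = 1 := by
  have hentry : ∀ i j : Fin 3, (Pi.single k (Pi.single l (1:ℝ)) : M3) i j
      = if i = k then (if j = l then 1 else 0) else 0 := by
    intro i j
    rcases eq_or_ne i k with h | h
    · subst h; simp [Pi.single_apply]
    · simp [Pi.single_eq_of_ne h, h]
  have hsum : ∀ i : Fin 3,
      (∑ j, ((Pi.single k (Pi.single l (1:ℝ)) : M3) i j) ^ 2) = if i = k then 1 else 0 := by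
    intro i
    rcases eq_or_ne i k with h | h
    · subst h
      simp only [hentry, if_true]
      simp [apply_ite (fun x : ℝ => x ^ 2), Finset.sum_ite_eq']
    · simp [hentry, h]
  rw [frob3]
  simp only [hsum]
  simp [Finset.sum_ite_eq']

end single

lemma dotF_comb (G c : ℝ) (A B Q : M3) :
    dotF (fun i j => G * B i j + c * A i j) Q = G * dotF B Q + c * dotF A Q := by
  simp only [dotF, Finset.mul_sum, ← Finset.sum_add_distrib]
  exact Finset.sum_congr rfl fun i _ => Finset.sum_congr rfl fun j _ => by ring


/-- For `p ∈ (1,∞)` there are `κ₀, κ₁ > 0` depending only on `p` (independent of `δ`)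
such that, for each `δ ≥ 0`, the map `S(P) = (δ+|P^sym|)^{p−2} P^sym` is continuously
differentiable on `{P | P^sym ≠ 0}` (and on all of ℝ^{3×3} if `δ > 0`), and for all
`P` with `P^sym ≠ 0` and all `Q`:
`∑ ∂_{kl}S_{ij}(P) Q_{ij} Q_{kl} ≥ κ₀·φ''(|P^sym|)·|Q^sym|²` and
`|∂_{kl}S_{ij}(P)| ≤ κ₁·φ''(|P^sym|)`; i.e., `S` has `(p,δ)`-structure with
characteristics depending only on `p`. -/
theorem S_has_p_delta_structure (p : ℝ) (hp : 1 < p) :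
    ∃ κ₀ κ₁ : ℝ, 0 < κ₀ ∧ 0 < κ₁ ∧
      ∀ δ : ℝ, 0 ≤ δ →
        ContDiffOn ℝ 1 (Smat p δ) {P : M3 | sym3 P ≠ 0} ∧
        (0 < δ → ContDiff ℝ 1 (Smat p δ)) ∧
        ∀ P : M3, sym3 P ≠ 0 →
          (∀ Q : M3,
            κ₀ * phiSecond p δ (frob3 (sym3 P)) * (frob3 (sym3 Q)) ^ 2
              ≤ dotF (fderiv ℝ (Smat p δ) P Q) Q) ∧
          (∀ i j k l : Fin 3,
            |fderiv ℝ (Smat p δ) P (Pi.single k (Pi.single l (1:ℝ))) i j|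
              ≤ κ₁ * phiSecond p δ (frob3 (sym3 P))) := by
  have hp1 : 0 < p - 1 := by linarith
  refine ⟨min (p - 1)⁻¹ 1, max 1 ((3 - p) / (p - 1)), lt_min (inv_pos.mpr hp1) one_pos,
    lt_of_lt_of_le one_pos (le_max_left _ _), ?_⟩
  intro δ hδ
  refine ⟨fun P hP => (contDiffAt_Smat p δ hδ P hP).contDiffWithinAt,
    fun h => contDiff_Smat p δ h, ?_⟩
  intro P hP
  have ha : 0 < frob3 (sym3 P) := frob3_pos hP
  have hδa : 0 < δ + frob3 (sym3 P) := by linarith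
  have hX3 : 0 < (δ + frob3 (sym3 P)) ^ (p - 3) := Real.rpow_pos_of_pos hδa _
  have hG : 0 < (δ + frob3 (sym3 P)) ^ (p - 2) := Real.rpow_pos_of_pos hδa _
  have hfd := fderiv_Smat_eq p δ hδ P hP
  constructor
  · intro Q
    rw [hfd, Dmat_apply, dotF_comb]
    rw [show dotF (sym3 Q) Q = frob3 (sym3 Q) ^ 2 by
      rw [dotF_symm_right (sym3_symm Q) Q, dotF_self]]
    rw [dotF_symm_right (sym3_symm P) Q]
    have := lower_scalar hp hδ ha (frob3_nonneg (sym3 Q)) (sq_dotF_le (sym3 P) (sym3 Q))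
    nlinarith [this]
  · intro i j k l
    simp only [hfd, Dmat_apply]
    have hb1 : frob3 (sym3 (Pi.single k (Pi.single l (1:ℝ)) : M3)) ≤ 1 :=
      (frob3_sym3_le _).trans_eq (frob3_single k l)
    have hBij : |sym3 (Pi.single k (Pi.single l (1:ℝ)) : M3) i j| ≤ 1 :=
      (abs_entry_le_frob3 _ i j).trans hb1
    have ht : |dotF (sym3 P) (sym3 (Pi.single k (Pi.single l (1:ℝ)) : M3))|
        ≤ frob3 (sym3 P) := by
      calc |dotF (sym3 P) (sym3 (Pi.single k (Pi.single l (1:ℝ)) : M3))|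
          ≤ frob3 (sym3 P) * frob3 (sym3 (Pi.single k (Pi.single l (1:ℝ)) : M3)) :=
            abs_dotF_le _ _
        _ ≤ frob3 (sym3 P) * 1 := mul_le_mul_of_nonneg_left hb1 ha.le
        _ = frob3 (sym3 P) := mul_one _
    have hAij : |sym3 P i j| ≤ frob3 (sym3 P) := abs_entry_le_frob3 _ i j
    have habs : |(p - 2) * (δ + frob3 (sym3 P)) ^ (p - 3) / frob3 (sym3 P) *
          dotF (sym3 P) (sym3 (Pi.single k (Pi.single l (1:ℝ)) : M3)) * sym3 P i j|
        = |p - 2| * (δ + frob3 (sym3 P)) ^ (p - 3) / frob3 (sym3 P) *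
          |dotF (sym3 P) (sym3 (Pi.single k (Pi.single l (1:ℝ)) : M3))| * |sym3 P i j| := by
      rw [abs_mul, abs_mul, abs_div, abs_mul, abs_of_pos hX3, abs_of_pos ha]
    have hsecond : |(p - 2) * (δ + frob3 (sym3 P)) ^ (p - 3) / frob3 (sym3 P) *
          dotF (sym3 P) (sym3 (Pi.single k (Pi.single l (1:ℝ)) : M3)) * sym3 P i j|
        ≤ |p - 2| * (δ + frob3 (sym3 P)) ^ (p - 3) * frob3 (sym3 P) := by
      rw [habs, div_mul_eq_mul_div, div_mul_eq_mul_div, div_le_iff₀ ha]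
      have hprod := mul_le_mul ht hAij (abs_nonneg _) ha.le
      nlinarith [abs_nonneg (p - 2), hX3.le,
        mul_le_mul_of_nonneg_left hprod (mul_nonneg (abs_nonneg (p - 2)) hX3.le)]
    have hfirst : |(δ + frob3 (sym3 P)) ^ (p - 2) *
          sym3 (Pi.single k (Pi.single l (1:ℝ)) : M3) i j|
        ≤ (δ + frob3 (sym3 P)) ^ (p - 2) := by
      rw [abs_mul, abs_of_pos hG]
      nlinarith [hBij, hG.le, abs_nonneg (sym3 (Pi.single k (Pi.single l (1:ℝ)) : M3) i j)]
    have hup := upper_scalar hp hδ ha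
    calc |(δ + frob3 (sym3 P)) ^ (p - 2) *
            sym3 (Pi.single k (Pi.single l (1:ℝ)) : M3) i j +
          (p - 2) * (δ + frob3 (sym3 P)) ^ (p - 3) / frob3 (sym3 P) *
            dotF (sym3 P) (sym3 (Pi.single k (Pi.single l (1:ℝ)) : M3)) * sym3 P i j|
        ≤ |(δ + frob3 (sym3 P)) ^ (p - 2) *
            sym3 (Pi.single k (Pi.single l (1:ℝ)) : M3) i j| +
          |(p - 2) * (δ + frob3 (sym3 P)) ^ (p - 3) / frob3 (sym3 P) *
            dotF (sym3 P) (sym3 (Pi.single k (Pi.single l (1:ℝ)) : M3)) * sym3 P i j| :=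
          abs_add_le _ _
      _ ≤ max 1 ((3 - p) / (p - 1)) * phiSecond p δ (frob3 (sym3 P)) := by
          linarith [hfirst, hsecond, hup]
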